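/- Let S_H and S_O be finite nonempty sets with the discrete σ-algebras, (Ω, F, μ) a probability space, and Hₙ : Ω → S_H, Oₙ : Ω → S_O measurable for n ∈ ℕ. The following are equivalent. (A) For every n ∈ ℕ and all functions f : S_O → ℝ, g : S_H → ℝ: μ-a.e., E[ f(O_{n+1})·g(H_{n+1}) | σ(H₀,O₀,…,Hₙ,Oₙ) ] = E[ f(O_{n+1}) | σ(Hₙ) ] · E[ g(H_{n+1}) | σ(Hₙ) ] (the backward hidden Markov condition). (B) Both: (i) (Hₙ) is a Markov chain, i.e. for every n and every g : S_H → ℝ, μ-a.e. E[ g(H_{n+1}) | σ(H₀,…,Hₙ) ] = E[ g(H_{n+1}) | σ(Hₙ) ]; and (ii) for every n and all f₀,…,fₙ : S_O → ℝ, μ-a.e. E[ ∏_{m=0}^{n} f_m(O_m) | σ(H₀,…,Hₙ) ] = ∏_{m=0}^{n} E[ f_m(O_m) | σ(H_{m−1}) ], with the convention that for m = 0 the conditioning σ-algebra σ(H_{−1}) means σ(H₀) (the time-consecutive conditional independence condition). -/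

import Mathlib

open MeasureTheory BigOperators

section Helpers

variable {Ω : Type*} {mΩ : MeasurableSpace Ω} {μ : Measure Ω}

lemma comap_le_of_fibers {T : Type*} [Countable T] {Y : Ω → T}
    (hY : ∀ t, MeasurableSet (Y ⁻¹' {t})) :
    MeasurableSpace.comap Y ⊤ ≤ mΩ := by
  rintro s ⟨u, -, rfl⟩
  have h : Y ⁻¹' u = ⋃ t ∈ u, Y ⁻¹' {t} := by ext ω; simp
  rw [h]
  exact MeasurableSet.biUnion u.to_countable (fun t _ => hY t)

lemma measurable_comap_comp {T : Type*} {Y : Ω → T} {β : Type*} [MeasurableSpace β]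
    (φ : T → β) : Measurable[MeasurableSpace.comap Y ⊤] (fun ω => φ (Y ω)) := by
  intro s _
  exact ⟨φ ⁻¹' s, trivial, rfl⟩

lemma integrable_comp [IsFiniteMeasure μ] {T : Type*} [Fintype T] {Y : Ω → T}
    (hY : ∀ t, MeasurableSet (Y ⁻¹' {t})) (φ : T → ℝ) :
    Integrable (fun ω => φ (Y ω)) μ := by
  have hm : Measurable (fun ω => φ (Y ω)) :=
    (measurable_comap_comp φ).mono (comap_le_of_fibers hY) le_rfl
  refine ⟨hm.aestronglyMeasurable, ?_⟩
  refine HasFiniteIntegral.of_bounded (C := ∑ t : T, ‖φ t‖) (ae_of_all _ fun ω => ?_)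
  exact Finset.single_le_sum (f := fun t => ‖φ t‖) (fun t _ => norm_nonneg _)
    (Finset.mem_univ (Y ω))

/-- average of `X` on the fiber of `Y` over `t` -/
noncomputable def avg (μ : Measure Ω) {T : Type*} (Y : Ω → T) (X : Ω → ℝ) (t : T) : ℝ :=
  (∫ x in Y ⁻¹' {t}, X x ∂μ) / (μ (Y ⁻¹' {t})).toReal

lemma avg_mul_measure [IsFiniteMeasure μ] {T : Type*} {Y : Ω → T} (X : Ω → ℝ) (t : T) :
    avg μ Y X t * (μ (Y ⁻¹' {t})).toReal = ∫ x in Y ⁻¹' {t}, X x ∂μ := by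
  rcases eq_or_ne (μ (Y ⁻¹' {t})) 0 with h | h
  · simp [avg, h, Measure.restrict_eq_zero.mpr h]
  · rw [avg, div_mul_cancel₀]
    exact ENNReal.toReal_ne_zero.mpr ⟨h, measure_ne_top _ _⟩

lemma setIntegral_fiber_sum [IsFiniteMeasure μ] {T : Type*} [Fintype T] {W : Ω → T}
    (hW : ∀ t, MeasurableSet (W ⁻¹' {t})) {X : Ω → ℝ} (hX : Integrable X μ) (S : Set Ω) :
    ∫ x in S, X x ∂μ = ∑ t : T, ∫ x in S ∩ W ⁻¹' {t}, X x ∂μ := by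
  have h1 : ∀ x, X x = ∑ t : T, (W ⁻¹' {t}).indicator X x := by
    intro x
    rw [Finset.sum_eq_single (W x)]
    · simp [Set.indicator_apply]
    · intro t _ ht
      simp [Set.indicator_apply, Ne.symm ht]
    · simp
  calc ∫ x in S, X x ∂μ = ∫ x in S, (∑ t : T, (W ⁻¹' {t}).indicator X x) ∂μ := by
        exact integral_congr_ae (ae_of_all _ fun x => h1 x)
    _ = ∑ t : T, ∫ x in S, (W ⁻¹' {t}).indicator X x ∂μ :=
        integral_finset_sum _ (fun t _ => (hX.indicator (hW t)).integrableOn)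
    _ = ∑ t : T, ∫ x in S ∩ W ⁻¹' {t}, X x ∂μ := by
        refine Finset.sum_congr rfl fun t _ => ?_
        exact setIntegral_indicator (hW t)

lemma condexp_comap_ae_eq [IsProbabilityMeasure μ] {T : Type*} [Fintype T] {Y : Ω → T}
    (hY : ∀ t, MeasurableSet (Y ⁻¹' {t})) {X : Ω → ℝ} (hX : Integrable X μ) :
    μ[X | MeasurableSpace.comap Y ⊤] =ᵐ[μ] fun ω => avg μ Y X (Y ω) := by
  have hle : MeasurableSpace.comap Y ⊤ ≤ mΩ := comap_le_of_fibers hY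
  haveI : SigmaFinite (μ.trim hle) := by
    have : IsFiniteMeasure (μ.trim hle) := isFiniteMeasure_trim hle
    infer_instance
  refine (ae_eq_condExp_of_forall_setIntegral_eq hle hX
    (fun s _ _ => (integrable_comp hY (avg μ Y X)).integrableOn)
    ?_ ?_).symm
  · rintro s ⟨u, -, rfl⟩ -
    rw [setIntegral_fiber_sum hY hX (Y ⁻¹' u),
      setIntegral_fiber_sum hY (integrable_comp hY (avg μ Y X)) (Y ⁻¹' u)]
    refine Finset.sum_congr rfl fun t _ => ?_
    by_cases ht : t ∈ u
    · have hs : Y ⁻¹' u ∩ Y ⁻¹' {t} = Y ⁻¹' {t} := by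
        ext ω; simp only [Set.mem_inter_iff, Set.mem_preimage, Set.mem_singleton_iff]
        exact ⟨fun h => h.2, fun h => ⟨h ▸ ht, h⟩⟩
      rw [hs]
      have : ∫ x in Y ⁻¹' {t}, avg μ Y X (Y x) ∂μ = ∫ _x in Y ⁻¹' {t}, avg μ Y X t ∂μ := by
        refine setIntegral_congr_fun (hY t) fun x hx => ?_
        simp only [Set.mem_preimage, Set.mem_singleton_iff] at hx
        rw [hx]
      rw [this, setIntegral_const, smul_eq_mul, mul_comm]
      exact avg_mul_measure X t
    · have hs : Y ⁻¹' u ∩ Y ⁻¹' {t} = ∅ := by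
        ext ω; simp only [Set.mem_inter_iff, Set.mem_preimage, Set.mem_singleton_iff,
          Set.mem_empty_iff_false, iff_false, not_and]
        rintro h rfl; exact ht h
      simp [hs]
  · exact StronglyMeasurable.aestronglyMeasurable
      (Measurable.stronglyMeasurable (measurable_comap_comp _))

lemma ae_comp_eq_iff [IsProbabilityMeasure μ] {T : Type*} [Countable T] {Y : Ω → T}
    (φ ψ : T → ℝ) :
    ((fun ω => φ (Y ω)) =ᵐ[μ] fun ω => ψ (Y ω)) ↔
      ∀ t, μ (Y ⁻¹' {t}) ≠ 0 → φ t = ψ t := by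
  constructor
  · intro h t ht
    by_contra hne
    have hsub : Y ⁻¹' {t} ⊆ {ω | ¬ φ (Y ω) = ψ (Y ω)} := by
      intro ω hω
      simp only [Set.mem_preimage, Set.mem_singleton_iff] at hω
      simpa [hω] using hne
    exact ht (measure_mono_null hsub (ae_iff.mp h))
  · intro h
    rw [Filter.EventuallyEq, ae_iff]
    have hsub : {ω | ¬ φ (Y ω) = ψ (Y ω)} = ⋃ t ∈ {t : T | φ t ≠ ψ t}, Y ⁻¹' {t} := by
      ext ω; simp
    rw [hsub]
    refine (measure_biUnion_null_iff (Set.to_countable _)).mpr fun t ht => ?_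
    by_contra h0
    exact ht (h t h0)

end Helpers

/-- The σ-algebra `σ(H₀,O₀,…,Hₙ,Oₙ)` generated by the first `n+1` hidden and observable
variables (discrete σ-algebras on the state spaces). -/
def sigHO {Ω S_H S_O : Type*} (H : ℕ → Ω → S_H) (O : ℕ → Ω → S_O) (n : ℕ) :
    MeasurableSpace Ω :=
  ⨆ m ∈ Finset.range (n + 1),
    (MeasurableSpace.comap (H m) ⊤ ⊔ MeasurableSpace.comap (O m) ⊤)

/-- The σ-algebra `σ(H₀,…,Hₙ)`. -/
def sigHs {Ω S_H : Type*} (H : ℕ → Ω → S_H) (n : ℕ) : MeasurableSpace Ω :=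
  ⨆ m ∈ Finset.range (n + 1), MeasurableSpace.comap (H m) ⊤

/-- The σ-algebra `σ(Hₙ)`. -/
def sigH {Ω S_H : Type*} (H : ℕ → Ω → S_H) (n : ℕ) : MeasurableSpace Ω :=
  MeasurableSpace.comap (H n) ⊤

section Sigma

variable {Ω : Type*}

lemma top_le_iSup_comap_eval {ι : Type*} [Finite ι] {π : ι → Type*} [∀ i, Countable (π i)] :
    (⊤ : MeasurableSpace (∀ i, π i)) ≤ ⨆ i, MeasurableSpace.comap (fun y => y i) ⊤ := by
  haveI : Countable (∀ i, π i) := inferInstance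
  intro s _
  have hs : s = ⋃ y ∈ s, {y} := by simp
  rw [hs]
  refine MeasurableSet.biUnion s.to_countable fun y _ => ?_
  have h1 : ({y} : Set (∀ i, π i)) = ⋂ i, (fun z => z i) ⁻¹' {y i} := by
    ext z; simp [funext_iff]
  rw [h1]
  haveI : Countable ι := Countable.of_equiv _ (Equiv.refl ι)
  refine MeasurableSet.iInter fun i => ?_
  exact le_iSup (fun i => MeasurableSpace.comap (fun y : ∀ i, π i => y i) ⊤) i
    _ ⟨{y i}, trivial, rfl⟩

lemma comap_pi_eq {ι : Type*} [Finite ι] {τ : Type*} [Countable τ]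
    (Z : ι → Ω → τ) :
    MeasurableSpace.comap (fun ω (i : ι) => Z i ω) ⊤ =
      ⨆ i, MeasurableSpace.comap (Z i) ⊤ := by
  apply le_antisymm
  · calc MeasurableSpace.comap (fun ω (i : ι) => Z i ω) ⊤
        ≤ MeasurableSpace.comap (fun ω (i : ι) => Z i ω)
            (⨆ i, MeasurableSpace.comap (fun y : ι → τ => y i) ⊤) :=
          MeasurableSpace.comap_mono top_le_iSup_comap_eval
      _ = ⨆ i, MeasurableSpace.comap (Z i) ⊤ := by
          rw [MeasurableSpace.comap_iSup]
          refine iSup_congr fun i => ?_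
          rw [MeasurableSpace.comap_comp]
          rfl
  · refine iSup_le fun i => ?_
    have : MeasurableSpace.comap (Z i) ⊤ =
        MeasurableSpace.comap (fun ω (j : ι) => Z j ω)
          (MeasurableSpace.comap (fun y : ι → τ => y i) ⊤) := by
      rw [MeasurableSpace.comap_comp]; rfl
    rw [this]
    exact MeasurableSpace.comap_mono le_top

lemma comap_pair_eq {A B : Type*} [Countable A] [Countable B] (f : Ω → A) (g : Ω → B) :
    MeasurableSpace.comap (fun ω => (f ω, g ω)) ⊤ =
      MeasurableSpace.comap f ⊤ ⊔ MeasurableSpace.comap g ⊤ := by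
  apply le_antisymm
  · have htop : (⊤ : MeasurableSpace (A × B)) ≤
        MeasurableSpace.comap Prod.fst ⊤ ⊔ MeasurableSpace.comap Prod.snd ⊤ := by
      intro s _
      have hs : s = ⋃ p ∈ s, {p} := by simp
      rw [hs]
      refine MeasurableSet.biUnion s.to_countable fun p _ => ?_
      have h1 : ({p} : Set (A × B)) = Prod.fst ⁻¹' {p.1} ∩ Prod.snd ⁻¹' {p.2} := by
        ext q; simp [Prod.ext_iff]
      rw [h1]
      exact MeasurableSet.inter
        (le_sup_left (a := MeasurableSpace.comap (Prod.fst : A × B → A) ⊤) _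
          ⟨{p.1}, trivial, rfl⟩)
        (le_sup_right (a := MeasurableSpace.comap (Prod.fst : A × B → A) ⊤) _
          ⟨{p.2}, trivial, rfl⟩)
    calc MeasurableSpace.comap (fun ω => (f ω, g ω)) ⊤
        ≤ MeasurableSpace.comap (fun ω => (f ω, g ω))
            (MeasurableSpace.comap Prod.fst ⊤ ⊔ MeasurableSpace.comap Prod.snd ⊤) :=
          MeasurableSpace.comap_mono htop
      _ = _ := by
          rw [MeasurableSpace.comap_sup, MeasurableSpace.comap_comp,
            MeasurableSpace.comap_comp]
          rfl
  · refine sup_le ?_ ?_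
    · have : MeasurableSpace.comap f ⊤ = MeasurableSpace.comap (fun ω => (f ω, g ω))
          (MeasurableSpace.comap Prod.fst ⊤) := by rw [MeasurableSpace.comap_comp]; rfl
      rw [this]; exact MeasurableSpace.comap_mono le_top
    · have : MeasurableSpace.comap g ⊤ = MeasurableSpace.comap (fun ω => (f ω, g ω))
          (MeasurableSpace.comap Prod.snd ⊤) := by rw [MeasurableSpace.comap_comp]; rfl
      rw [this]; exact MeasurableSpace.comap_mono le_top

variable {S_H S_O : Type*} [Countable S_H] [Countable S_O]

lemma sigHs_eq (H : ℕ → Ω → S_H) (n : ℕ) :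
    sigHs H n = MeasurableSpace.comap (fun ω (m : Fin (n + 1)) => H m ω) ⊤ := by
  rw [comap_pi_eq (fun (m : Fin (n + 1)) => H m)]
  unfold sigHs
  apply le_antisymm
  · refine iSup_le fun m => iSup_le fun hm => ?_
    have hm' : m < n + 1 := Finset.mem_range.mp hm
    exact le_iSup_of_le ⟨m, hm'⟩ le_rfl
  · refine iSup_le fun m => ?_
    exact le_iSup_of_le (m : ℕ) (le_iSup_of_le (Finset.mem_range.mpr m.isLt) le_rfl)

lemma sigHO_eq (H : ℕ → Ω → S_H) (O : ℕ → Ω → S_O) (n : ℕ) :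
    sigHO H O n =
      MeasurableSpace.comap (fun ω (m : Fin (n + 1)) => (H m ω, O m ω)) ⊤ := by
  rw [comap_pi_eq (fun (m : Fin (n + 1)) ω => (H m ω, O m ω))]
  unfold sigHO
  have hpair : ∀ m : Fin (n + 1),
      MeasurableSpace.comap (fun ω => (H m ω, O m ω)) ⊤ =
        MeasurableSpace.comap (H m) ⊤ ⊔ MeasurableSpace.comap (O m) ⊤ :=
    fun m => comap_pair_eq _ _
  apply le_antisymm
  · refine iSup_le fun m => iSup_le fun hm => ?_
    have hm' : m < n + 1 := Finset.mem_range.mp hm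
    exact le_iSup_of_le ⟨m, hm'⟩ (le_of_eq (hpair ⟨m, hm'⟩).symm)
  · refine iSup_le fun m => ?_
    rw [hpair m]
    exact le_iSup_of_le (m : ℕ) (le_iSup_of_le (Finset.mem_range.mpr m.isLt) le_rfl)

end Sigma

section Main
set_option linter.unusedSectionVars false

variable {S_H S_O : Type*} [Fintype S_H] [Fintype S_O] [Nonempty S_H] [Nonempty S_O]
  {Ω : Type*} [MeasurableSpace Ω] {μ : Measure Ω} [IsProbabilityMeasure μ]
  {H : ℕ → Ω → S_H} {O : ℕ → Ω → S_O}

/-- the event `H₀ = y₀, …, Hₙ = yₙ` -/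
def FH (H : ℕ → Ω → S_H) (n : ℕ) (y : ℕ → S_H) : Set Ω := {ω | ∀ m < n + 1, H m ω = y m}

def FO (O : ℕ → Ω → S_O) (n : ℕ) (o : ℕ → S_O) : Set Ω := {ω | ∀ m < n + 1, O m ω = o m}

def FHO (H : ℕ → Ω → S_H) (O : ℕ → Ω → S_O) (n : ℕ) (y : ℕ → S_H) (o : ℕ → S_O) :
    Set Ω := FH H n y ∩ FO O n o

noncomputable def qO (μ : Measure Ω) (H : ℕ → Ω → S_H) (O : ℕ → Ω → S_O) (k m : ℕ)
    (f : S_O → ℝ) (t : S_H) : ℝ :=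
  avg μ (H k) (fun ω => f (O m ω)) t

noncomputable def qH (μ : Measure Ω) (H : ℕ → Ω → S_H) (n : ℕ) (g : S_H → ℝ) (t : S_H) : ℝ :=
  avg μ (H n) (fun ω => g (H (n + 1) ω)) t

def extSeq {α : Type*} (n : ℕ) (v : Fin (n + 1) → α) : ℕ → α := fun m => v ⟨min m n, by omega⟩

lemma extSeq_eq {α : Type*} (n : ℕ) (v : Fin (n + 1) → α) {m : ℕ} (h : m < n + 1) :
    extSeq n v m = v ⟨m, h⟩ :=
  congrArg v (Fin.ext (Nat.min_eq_left (by omega)))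

lemma fib_ZH_meas (hH : ∀ n, @Measurable Ω S_H _ ⊤ (H n)) (n : ℕ)
    (z : Fin (n + 1) → S_H) :
    MeasurableSet ((fun ω (m : Fin (n + 1)) => H m ω) ⁻¹' {z}) := by
  have h : (fun ω (m : Fin (n + 1)) => H m ω) ⁻¹' {z} =
      ⋂ m : Fin (n + 1), (H m) ⁻¹' {z m} := by
    ext ω; simp [funext_iff]
  rw [h]
  exact MeasurableSet.iInter fun m => hH m trivial

lemma fib_ZO_meas (hO : ∀ n, @Measurable Ω S_O _ ⊤ (O n)) (n : ℕ)
    (v : Fin (n + 1) → S_O) :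
    MeasurableSet ((fun ω (m : Fin (n + 1)) => O m ω) ⁻¹' {v}) := by
  have h : (fun ω (m : Fin (n + 1)) => O m ω) ⁻¹' {v} =
      ⋂ m : Fin (n + 1), (O m) ⁻¹' {v m} := by
    ext ω; simp [funext_iff]
  rw [h]
  exact MeasurableSet.iInter fun m => hO m trivial

lemma fib_ZHO_meas (hH : ∀ n, @Measurable Ω S_H _ ⊤ (H n))
    (hO : ∀ n, @Measurable Ω S_O _ ⊤ (O n)) (n : ℕ) (z : Fin (n + 1) → S_H × S_O) :
    MeasurableSet ((fun ω (m : Fin (n + 1)) => (H m ω, O m ω)) ⁻¹' {z}) := by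
  have h : (fun ω (m : Fin (n + 1)) => (H m ω, O m ω)) ⁻¹' {z} =
      ⋂ m : Fin (n + 1), ((H m) ⁻¹' {(z m).1} ∩ (O m) ⁻¹' {(z m).2}) := by
    ext ω; simp [funext_iff, Prod.ext_iff]
  rw [h]
  exact MeasurableSet.iInter fun m => (hH m trivial).inter (hO m trivial)

lemma fib_pair_meas {A B : Type*} {Y : Ω → A} {W : Ω → B}
    (hY : ∀ a, MeasurableSet (Y ⁻¹' {a})) (hW : ∀ b, MeasurableSet (W ⁻¹' {b})) :
    ∀ p : A × B, MeasurableSet ((fun ω => (Y ω, W ω)) ⁻¹' {p}) := by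
  intro p
  have h : (fun ω => (Y ω, W ω)) ⁻¹' {p} = Y ⁻¹' {p.1} ∩ W ⁻¹' {p.2} := by
    ext ω; simp [Prod.ext_iff]
  rw [h]; exact (hY p.1).inter (hW p.2)

lemma FH_eq_fib (n : ℕ) (y : ℕ → S_H) :
    FH H n y = (fun ω (m : Fin (n + 1)) => H m ω) ⁻¹' {fun m : Fin (n + 1) => y m} := by
  ext ω
  simp only [FH, Set.mem_setOf_eq, Set.mem_preimage, Set.mem_singleton_iff, funext_iff]
  exact ⟨fun h m => h m m.isLt, fun h m hm => h ⟨m, hm⟩⟩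

lemma FO_eq_fib (n : ℕ) (o : ℕ → S_O) :
    FO O n o = (fun ω (m : Fin (n + 1)) => O m ω) ⁻¹' {fun m : Fin (n + 1) => o m} := by
  ext ω
  simp only [FO, Set.mem_setOf_eq, Set.mem_preimage, Set.mem_singleton_iff, funext_iff]
  exact ⟨fun h m => h m m.isLt, fun h m hm => h ⟨m, hm⟩⟩

lemma FHO_eq_fib (n : ℕ) (y : ℕ → S_H) (o : ℕ → S_O) :
    FHO H O n y o =
      (fun ω (m : Fin (n + 1)) => (H m ω, O m ω)) ⁻¹' {fun m : Fin (n + 1) => (y m, o m)} := by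
  ext ω
  simp only [FHO, FH, FO, Set.mem_inter_iff, Set.mem_setOf_eq, Set.mem_preimage,
    Set.mem_singleton_iff, funext_iff, Prod.ext_iff]
  constructor
  · rintro ⟨h1, h2⟩ m; exact ⟨h1 m m.isLt, h2 m m.isLt⟩
  · intro h; exact ⟨fun m hm => (h ⟨m, hm⟩).1, fun m hm => (h ⟨m, hm⟩).2⟩

lemma FH_meas (hH : ∀ n, @Measurable Ω S_H _ ⊤ (H n)) (n : ℕ) (y : ℕ → S_H) :
    MeasurableSet (FH H n y) := by
  rw [FH_eq_fib]; exact fib_ZH_meas hH n _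

lemma FO_meas (hO : ∀ n, @Measurable Ω S_O _ ⊤ (O n)) (n : ℕ) (o : ℕ → S_O) :
    MeasurableSet (FO O n o) := by
  rw [FO_eq_fib]; exact fib_ZO_meas hO n _

lemma FHO_meas (hH : ∀ n, @Measurable Ω S_H _ ⊤ (H n))
    (hO : ∀ n, @Measurable Ω S_O _ ⊤ (O n)) (n : ℕ) (y : ℕ → S_H) (o : ℕ → S_O) :
    MeasurableSet (FHO H O n y o) := by
  rw [FHO_eq_fib]; exact fib_ZHO_meas hH hO n _

lemma toReal_ne_zero' {s : Set Ω} (h : μ s ≠ 0) : (μ s).toReal ≠ 0 :=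
  ENNReal.toReal_ne_zero.mpr ⟨h, measure_ne_top _ _⟩

lemma transA (hH : ∀ n, @Measurable Ω S_H _ ⊤ (H n))
    (hO : ∀ n, @Measurable Ω S_O _ ⊤ (O n)) (n : ℕ) (f : S_O → ℝ) (g : S_H → ℝ) :
    (μ[(fun ω => f (O (n + 1) ω) * g (H (n + 1) ω)) | sigHO H O n] =ᵐ[μ]
      fun ω =>
        (μ[(fun ω' => f (O (n + 1) ω')) | sigH H n]) ω *
          (μ[(fun ω' => g (H (n + 1) ω')) | sigH H n]) ω) ↔
    (∀ (y : ℕ → S_H) (o : ℕ → S_O), μ (FHO H O n y o) ≠ 0 →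
      ∫ ω in FHO H O n y o, f (O (n + 1) ω) * g (H (n + 1) ω) ∂μ =
        (μ (FHO H O n y o)).toReal * (qO μ H O n (n + 1) f (y n) * qH μ H n g (y n))) := by
  have hXint : Integrable (fun ω => f (O (n + 1) ω) * g (H (n + 1) ω)) μ :=
    integrable_comp (fib_pair_meas (fun a => hO (n+1) trivial) (fun b => hH (n+1) trivial))
      (fun p => f p.1 * g p.2)
  have h1 : μ[(fun ω => f (O (n + 1) ω) * g (H (n + 1) ω)) | sigHO H O n] =ᵐ[μ]
      fun ω => avg μ (fun ω (m : Fin (n + 1)) => (H m ω, O m ω))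
        (fun ω => f (O (n + 1) ω) * g (H (n + 1) ω))
        ((fun ω (m : Fin (n + 1)) => (H m ω, O m ω)) ω) := by
    rw [sigHO_eq H O n]
    exact condexp_comap_ae_eq (fib_ZHO_meas hH hO n) hXint
  have haf : μ[(fun ω' => f (O (n + 1) ω')) | sigH H n] =ᵐ[μ]
      fun ω => qO μ H O n (n + 1) f (H n ω) :=
    condexp_comap_ae_eq (fun t => hH n trivial)
      (integrable_comp (fun t => hO (n+1) trivial) f)
  have hag : μ[(fun ω' => g (H (n + 1) ω')) | sigH H n] =ᵐ[μ]
      fun ω => qH μ H n g (H n ω) :=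
    condexp_comap_ae_eq (fun t => hH n trivial)
      (integrable_comp (fun t => hH (n+1) trivial) g)
  have hRHS : (fun ω =>
        (μ[(fun ω' => f (O (n + 1) ω')) | sigH H n]) ω *
          (μ[(fun ω' => g (H (n + 1) ω')) | sigH H n]) ω) =ᵐ[μ]
      fun ω => qO μ H O n (n + 1) f (H n ω) * qH μ H n g (H n ω) := haf.mul hag
  have hall : (μ[(fun ω => f (O (n + 1) ω) * g (H (n + 1) ω)) | sigHO H O n] =ᵐ[μ]
      fun ω =>
        (μ[(fun ω' => f (O (n + 1) ω')) | sigH H n]) ω *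
          (μ[(fun ω' => g (H (n + 1) ω')) | sigH H n]) ω) ↔
      ∀ z : Fin (n + 1) → S_H × S_O,
        μ ((fun ω (m : Fin (n + 1)) => (H m ω, O m ω)) ⁻¹' {z}) ≠ 0 →
        avg μ (fun ω (m : Fin (n + 1)) => (H m ω, O m ω))
          (fun ω => f (O (n + 1) ω) * g (H (n + 1) ω)) z =
          qO μ H O n (n + 1) f (z (Fin.last n)).1 * qH μ H n g (z (Fin.last n)).1 := by
    rw [← ae_comp_eq_iff (μ := μ) (Y := fun ω (m : Fin (n + 1)) => (H m ω, O m ω))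
      (avg μ (fun ω (m : Fin (n + 1)) => (H m ω, O m ω))
        (fun ω => f (O (n + 1) ω) * g (H (n + 1) ω)))
      (fun z => qO μ H O n (n + 1) f (z (Fin.last n)).1 * qH μ H n g (z (Fin.last n)).1)]
    exact ⟨fun hA => h1.symm.trans (hA.trans hRHS),
      fun hc => h1.trans (hc.trans hRHS.symm)⟩
  rw [hall]
  constructor
  · intro hz y o hpos
    have hfib := FHO_eq_fib (H := H) (O := O) n y o
    have h3 := hz (fun m : Fin (n + 1) => (y m, o m)) (by rw [← hfib]; exact hpos)
    have hc : (μ (FHO H O n y o)).toReal ≠ 0 := toReal_ne_zero' hpos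
    rw [avg, ← hfib, div_eq_iff hc] at h3
    simp only [Fin.val_last] at h3
    rw [h3]
    ring
  · intro hstar z hz
    have hzy : (fun m : Fin (n + 1) => (extSeq n (fun k => (z k).1) m,
        extSeq n (fun k => (z k).2) m)) = z := by
      funext m
      rw [extSeq_eq n _ m.isLt, extSeq_eq n _ m.isLt]
    have hfib : FHO H O n (extSeq n (fun k => (z k).1)) (extSeq n (fun k => (z k).2)) =
        (fun ω (m : Fin (n + 1)) => (H m ω, O m ω)) ⁻¹' {z} := by
      rw [FHO_eq_fib, hzy]
    have hpos : μ (FHO H O n (extSeq n (fun k => (z k).1)) (extSeq n (fun k => (z k).2))) ≠ 0 := by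
      rw [hfib]; exact hz
    have h4 := hstar _ _ hpos
    have hc : (μ (FHO H O n (extSeq n (fun k => (z k).1)) (extSeq n (fun k => (z k).2)))).toReal ≠ 0 :=
      toReal_ne_zero' hpos
    have hyn : extSeq n (fun k => (z k).1) n = (z (Fin.last n)).1 :=
      extSeq_eq n _ (Nat.lt_succ_self n)
    have hon : qH μ H n g (extSeq n (fun k => (z k).1) n) = qH μ H n g (z (Fin.last n)).1 := by
      rw [hyn]
    rw [avg, ← hfib, h4, ← hyn]
    exact mul_div_cancel_left₀ _ hc

lemma transB1 (hH : ∀ n, @Measurable Ω S_H _ ⊤ (H n)) (n : ℕ) (g : S_H → ℝ) :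
    (μ[(fun ω => g (H (n + 1) ω)) | sigHs H n] =ᵐ[μ]
      μ[(fun ω => g (H (n + 1) ω)) | sigH H n]) ↔
    (∀ y : ℕ → S_H, μ (FH H n y) ≠ 0 →
      ∫ ω in FH H n y, g (H (n + 1) ω) ∂μ = (μ (FH H n y)).toReal * qH μ H n g (y n)) := by
  have hXint : Integrable (fun ω => g (H (n + 1) ω)) μ :=
    integrable_comp (fun t => hH (n+1) trivial) g
  have h1 : μ[(fun ω => g (H (n + 1) ω)) | sigHs H n] =ᵐ[μ]
      fun ω => avg μ (fun ω (m : Fin (n + 1)) => H m ω) (fun ω => g (H (n + 1) ω))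
        ((fun ω (m : Fin (n + 1)) => H m ω) ω) := by
    rw [sigHs_eq H n]
    exact condexp_comap_ae_eq (fib_ZH_meas hH n) hXint
  have hRHS : μ[(fun ω => g (H (n + 1) ω)) | sigH H n] =ᵐ[μ]
      fun ω => qH μ H n g (H n ω) :=
    condexp_comap_ae_eq (fun t => hH n trivial) hXint
  have hall : (μ[(fun ω => g (H (n + 1) ω)) | sigHs H n] =ᵐ[μ]
      μ[(fun ω => g (H (n + 1) ω)) | sigH H n]) ↔
      ∀ z : Fin (n + 1) → S_H,
        μ ((fun ω (m : Fin (n + 1)) => H m ω) ⁻¹' {z}) ≠ 0 →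
        avg μ (fun ω (m : Fin (n + 1)) => H m ω) (fun ω => g (H (n + 1) ω)) z =
          qH μ H n g (z (Fin.last n)) := by
    rw [← ae_comp_eq_iff (μ := μ) (Y := fun ω (m : Fin (n + 1)) => H m ω)
      (avg μ (fun ω (m : Fin (n + 1)) => H m ω) (fun ω => g (H (n + 1) ω)))
      (fun z => qH μ H n g (z (Fin.last n)))]
    exact ⟨fun hA => h1.symm.trans (hA.trans hRHS),
      fun hc => h1.trans (hc.trans hRHS.symm)⟩
  rw [hall]
  constructor
  · intro hz y hpos
    have hfib := FH_eq_fib (H := H) n y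
    have h3 := hz (fun m : Fin (n + 1) => y m) (by rw [← hfib]; exact hpos)
    have hc : (μ (FH H n y)).toReal ≠ 0 := toReal_ne_zero' hpos
    rw [avg, ← hfib, div_eq_iff hc] at h3
    simp only [Fin.val_last] at h3
    rw [h3]
    ring
  · intro hstar z hz
    have hzy : (fun m : Fin (n + 1) => extSeq n z m) = z := by
      funext m
      rw [extSeq_eq n _ m.isLt]
    have hfib : FH H n (extSeq n z) = (fun ω (m : Fin (n + 1)) => H m ω) ⁻¹' {z} := by
      rw [FH_eq_fib, hzy]
    have hpos : μ (FH H n (extSeq n z)) ≠ 0 := by rw [hfib]; exact hz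
    have h4 := hstar _ hpos
    have hc : (μ (FH H n (extSeq n z))).toReal ≠ 0 := toReal_ne_zero' hpos
    have hyn : extSeq n z n = z (Fin.last n) := extSeq_eq n _ (Nat.lt_succ_self n)
    rw [avg, ← hfib, h4, ← hyn]
    exact mul_div_cancel_left₀ _ hc

lemma transB2 (hH : ∀ n, @Measurable Ω S_H _ ⊤ (H n))
    (hO : ∀ n, @Measurable Ω S_O _ ⊤ (O n)) (n : ℕ) (f : ℕ → S_O → ℝ) :
    (μ[(fun ω => ∏ m ∈ Finset.range (n + 1), f m (O m ω)) | sigHs H n] =ᵐ[μ]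
      fun ω => ∏ m ∈ Finset.range (n + 1),
        (μ[(fun ω' => f m (O m ω')) | sigH H (m - 1)]) ω) ↔
    (∀ y : ℕ → S_H, μ (FH H n y) ≠ 0 →
      ∫ ω in FH H n y, ∏ m ∈ Finset.range (n + 1), f m (O m ω) ∂μ =
        (μ (FH H n y)).toReal *
          ∏ m ∈ Finset.range (n + 1), qO μ H O (m - 1) m (f m) (y (m - 1))) := by
  have hXeq : (fun ω => ∏ m ∈ Finset.range (n + 1), f m (O m ω)) =
      fun ω => (fun v : Fin (n + 1) → S_O =>
        ∏ m ∈ Finset.range (n + 1), f m (extSeq n v m)) ((fun ω (m : Fin (n + 1)) => O m ω) ω) := by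
    funext ω
    refine Finset.prod_congr rfl fun m hm => ?_
    rw [extSeq_eq n _ (Finset.mem_range.mp hm)]
  have hXint : Integrable (fun ω => ∏ m ∈ Finset.range (n + 1), f m (O m ω)) μ := by
    rw [hXeq]
    exact integrable_comp (fib_ZO_meas hO n)
      (fun v : Fin (n + 1) → S_O => ∏ m ∈ Finset.range (n + 1), f m (extSeq n v m))
  have h1 : μ[(fun ω => ∏ m ∈ Finset.range (n + 1), f m (O m ω)) | sigHs H n] =ᵐ[μ]
      fun ω => avg μ (fun ω (m : Fin (n + 1)) => H m ω)
        (fun ω => ∏ m ∈ Finset.range (n + 1), f m (O m ω))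
        ((fun ω (m : Fin (n + 1)) => H m ω) ω) := by
    rw [sigHs_eq H n]
    exact condexp_comap_ae_eq (fib_ZH_meas hH n) hXint
  have hfac : ∀ m ∈ Finset.range (n + 1),
      (μ[(fun ω' => f m (O m ω')) | sigH H (m - 1)]) =ᵐ[μ]
        fun ω => qO μ H O (m - 1) m (f m) (H (m - 1) ω) := fun m _ =>
    condexp_comap_ae_eq (fun t => hH (m - 1) trivial)
      (integrable_comp (fun t => hO m trivial) (f m))
  have hRHS : (fun ω => ∏ m ∈ Finset.range (n + 1),
        (μ[(fun ω' => f m (O m ω')) | sigH H (m - 1)]) ω) =ᵐ[μ]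
      fun ω => ∏ m ∈ Finset.range (n + 1), qO μ H O (m - 1) m (f m) (H (m - 1) ω) := by
    have h := (Filter.eventually_all_finset (Finset.range (n + 1))).mpr hfac
    exact h.mono fun ω hω => Finset.prod_congr rfl fun m hm => hω m hm
  have hψZ : (fun ω => ∏ m ∈ Finset.range (n + 1),
        qO μ H O (m - 1) m (f m) (extSeq n ((fun ω (m : Fin (n + 1)) => H m ω) ω) (m - 1))) =
      fun ω => ∏ m ∈ Finset.range (n + 1), qO μ H O (m - 1) m (f m) (H (m - 1) ω) := by
    funext ω
    refine Finset.prod_congr rfl fun m hm => ?_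
    rw [extSeq_eq n _ (show m - 1 < n + 1 by
      have := Finset.mem_range.mp hm; omega)]
  have hRHS' : (fun ω => ∏ m ∈ Finset.range (n + 1),
        (μ[(fun ω' => f m (O m ω')) | sigH H (m - 1)]) ω) =ᵐ[μ]
      fun ω => ∏ m ∈ Finset.range (n + 1),
        qO μ H O (m - 1) m (f m) (extSeq n ((fun ω (m : Fin (n + 1)) => H m ω) ω) (m - 1)) := by
    rw [hψZ]
    exact hRHS
  have hall : (μ[(fun ω => ∏ m ∈ Finset.range (n + 1), f m (O m ω)) | sigHs H n] =ᵐ[μ]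
      fun ω => ∏ m ∈ Finset.range (n + 1),
        (μ[(fun ω' => f m (O m ω')) | sigH H (m - 1)]) ω) ↔
      ∀ z : Fin (n + 1) → S_H,
        μ ((fun ω (m : Fin (n + 1)) => H m ω) ⁻¹' {z}) ≠ 0 →
        avg μ (fun ω (m : Fin (n + 1)) => H m ω)
          (fun ω => ∏ m ∈ Finset.range (n + 1), f m (O m ω)) z =
          ∏ m ∈ Finset.range (n + 1), qO μ H O (m - 1) m (f m) (extSeq n z (m - 1)) := by
    rw [← ae_comp_eq_iff (μ := μ) (Y := fun ω (m : Fin (n + 1)) => H m ω)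
      (avg μ (fun ω (m : Fin (n + 1)) => H m ω)
        (fun ω => ∏ m ∈ Finset.range (n + 1), f m (O m ω)))
      (fun z => ∏ m ∈ Finset.range (n + 1), qO μ H O (m - 1) m (f m) (extSeq n z (m - 1)))]
    exact ⟨fun hA => h1.symm.trans (hA.trans hRHS'),
      fun hc => h1.trans (hc.trans hRHS'.symm)⟩
  rw [hall]
  constructor
  · intro hz y hpos
    have hfib := FH_eq_fib (H := H) n y
    have h3 := hz (fun m : Fin (n + 1) => y m) (by rw [← hfib]; exact hpos)
    have hc : (μ (FH H n y)).toReal ≠ 0 := toReal_ne_zero' hpos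
    rw [avg, ← hfib, div_eq_iff hc] at h3
    have hprod : ∏ m ∈ Finset.range (n + 1),
        qO μ H O (m - 1) m (f m) (extSeq n (fun k : Fin (n + 1) => y k) (m - 1)) =
        ∏ m ∈ Finset.range (n + 1), qO μ H O (m - 1) m (f m) (y (m - 1)) := by
      refine Finset.prod_congr rfl fun m hm => ?_
      rw [extSeq_eq n _ (show m - 1 < n + 1 by
        have := Finset.mem_range.mp hm; omega)]
    rw [hprod] at h3
    rw [h3]
    ring
  · intro hstar z hz
    have hzy : (fun m : Fin (n + 1) => extSeq n z m) = z := by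
      funext m
      rw [extSeq_eq n _ m.isLt]
    have hfib : FH H n (extSeq n z) = (fun ω (m : Fin (n + 1)) => H m ω) ⁻¹' {z} := by
      rw [FH_eq_fib, hzy]
    have hpos : μ (FH H n (extSeq n z)) ≠ 0 := by rw [hfib]; exact hz
    have h4 := hstar _ hpos
    have hc : (μ (FH H n (extSeq n z))).toReal ≠ 0 := toReal_ne_zero' hpos
    rw [avg, ← hfib, h4]
    exact mul_div_cancel_left₀ _ hc

noncomputable def indF {α : Type*} (a : α) : α → ℝ :=
  fun b => @ite _ (b = a) (Classical.propDecidable _) 1 0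

lemma indF_pos {α : Type*} {a b : α} (h : b = a) : indF a b = 1 := by
  rw [indF]; exact if_pos h

lemma indF_neg {α : Type*} {a b : α} (h : ¬ b = a) : indF a b = 0 := by
  rw [indF]; exact if_neg h

lemma meas_split {T : Type*} [Fintype T] {W : Ω → T}
    (hW : ∀ t, MeasurableSet (W ⁻¹' {t})) (S : Set Ω) :
    (μ S).toReal = ∑ t : T, (μ (S ∩ W ⁻¹' {t})).toReal := by
  have h1 := setIntegral_fiber_sum (μ := μ) hW (integrable_const (1 : ℝ)) S
  simpa [Measure.real] using h1

lemma setIntegral_mul_ind {A : Type*} {W : Ω → A} {t : A}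
    (hfib : MeasurableSet (W ⁻¹' {t})) (X : Ω → ℝ) (S : Set Ω) :
    ∫ ω in S, X ω * indF t (W ω) ∂μ = ∫ ω in S ∩ W ⁻¹' {t}, X ω ∂μ := by
  calc ∫ ω in S, X ω * indF t (W ω) ∂μ
      = ∫ ω in S, (W ⁻¹' {t}).indicator X ω ∂μ := by
        refine integral_congr_ae (ae_of_all _ fun ω => ?_)
        show X ω * indF t (W ω) = (W ⁻¹' {t}).indicator X ω
        by_cases h : W ω = t
        · rw [indF_pos h, Set.indicator_of_mem (show ω ∈ W ⁻¹' {t} from h), mul_one]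
        · rw [indF_neg h, Set.indicator_of_notMem (show ω ∉ W ⁻¹' {t} from h), mul_zero]
    _ = ∫ ω in S ∩ W ⁻¹' {t}, X ω ∂μ := setIntegral_indicator hfib

lemma setIntegral_ind_one {A : Type*} {W : Ω → A} {t : A}
    (hfib : MeasurableSet (W ⁻¹' {t})) (S : Set Ω) :
    ∫ ω in S, indF t (W ω) ∂μ = (μ (S ∩ W ⁻¹' {t})).toReal := by
  have h := setIntegral_mul_ind (μ := μ) hfib (fun _ => (1 : ℝ)) S
  simp only [one_mul] at h
  rw [h]
  simp
  rfl

lemma qO_one {k m : ℕ} {t : S_H} (h : μ ((H k) ⁻¹' {t}) ≠ 0) :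
    qO μ H O k m (fun _ => (1 : ℝ)) t = 1 := by
  rw [qO, avg]
  simp only [integral_const, smul_eq_mul, mul_one, Measure.restrict_apply_univ, Measure.real]
  exact div_self (toReal_ne_zero' h)

lemma qH_decomp (hH : ∀ n, @Measurable Ω S_H _ ⊤ (H n)) {n : ℕ}
    {t : S_H} (h : μ ((H n) ⁻¹' {t}) ≠ 0) (g : S_H → ℝ) :
    qH μ H n g t = ∑ h' : S_H, g h' * qH μ H n (indF h') t := by
  have hsplit := setIntegral_fiber_sum (μ := μ) (W := H (n + 1))
    (fun h' => hH (n + 1) trivial)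
    (integrable_comp (fun t' => hH (n + 1) trivial) g) ((H n) ⁻¹' {t})
  have hterm : ∀ h' : S_H,
      ∫ ω in (H n) ⁻¹' {t} ∩ (H (n + 1)) ⁻¹' {h'}, g (H (n + 1) ω) ∂μ =
        g h' * (μ ((H n) ⁻¹' {t} ∩ (H (n + 1)) ⁻¹' {h'})).toReal := by
    intro h'
    have hmeas : MeasurableSet ((H n) ⁻¹' {t} ∩ (H (n + 1)) ⁻¹' {h'}) :=
      (hH n trivial).inter (hH (n + 1) trivial)
    rw [setIntegral_congr_fun hmeas (g := fun _ => g h')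
      (fun ω hω => by rw [hω.2])]
    rw [setIntegral_const, smul_eq_mul, mul_comm]
    rfl
  have hind : ∀ h' : S_H, qH μ H n (indF h') t =
      (μ ((H n) ⁻¹' {t} ∩ (H (n + 1)) ⁻¹' {h'})).toReal / (μ ((H n) ⁻¹' {t})).toReal := by
    intro h'
    rw [qH, avg, setIntegral_ind_one (hH (n + 1) trivial)]
  rw [qH, avg, hsplit]
  rw [Finset.sum_div]
  refine Finset.sum_congr rfl fun h' _ => ?_
  rw [hterm h', hind h', mul_div_assoc]

lemma FH_zero (y : ℕ → S_H) : FH H 0 y = (H 0) ⁻¹' {y 0} := by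
  ext ω
  simp only [FH, Set.mem_setOf_eq, Set.mem_preimage, Set.mem_singleton_iff]
  refine ⟨fun h => h 0 Nat.one_pos, fun h m hm => ?_⟩
  have hm0 : m = 0 := by omega
  rw [hm0]; exact h

lemma FH_succ (n : ℕ) (y : ℕ → S_H) :
    FH H (n + 1) y = FH H n y ∩ (H (n + 1)) ⁻¹' {y (n + 1)} := by
  ext ω
  simp only [FH, Set.mem_setOf_eq, Set.mem_inter_iff, Set.mem_preimage, Set.mem_singleton_iff]
  constructor
  · intro h
    exact ⟨fun m hm => h m (by omega), h (n + 1) (by omega)⟩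
  · rintro ⟨h1, h2⟩ m hm
    rcases Nat.lt_or_ge m (n + 1) with h | h
    · exact h1 m h
    · have : m = n + 1 := by omega
      rw [this]; exact h2

lemma FH_update_succ (n : ℕ) (y : ℕ → S_H) (h' : S_H) :
    FH H (n + 1) (Function.update y (n + 1) h') = FH H n y ∩ (H (n + 1)) ⁻¹' {h'} := by
  rw [FH_succ]
  congr 1
  · ext ω
    simp only [FH, Set.mem_setOf_eq]
    constructor
    · intro h m hm; rw [← Function.update_of_ne (by omega : m ≠ n + 1) h' y]; exact h m hm
    · intro h m hm; rw [Function.update_of_ne (by omega : m ≠ n + 1) h' y]; exact h m hm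
  · rw [Function.update_self]

lemma FH_antitone (n : ℕ) (y : ℕ → S_H) : FH H (n + 1) y ⊆ FH H n y :=
  fun ω h m hm => h m (by omega)

lemma FH_subset_fib {n k : ℕ} (hk : k < n + 1) (y : ℕ → S_H) :
    FH H n y ⊆ (H k) ⁻¹' {y k} := fun ω h => h k hk

lemma FH_inter_ZO (n : ℕ) (y : ℕ → S_H) (v : Fin (n + 1) → S_O) :
    FH H n y ∩ ((fun ω (m : Fin (n + 1)) => O m ω) ⁻¹' {v}) = FHO H O n y (extSeq n v) := by
  rw [FHO]
  congr 1
  ext ω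
  simp only [Set.mem_preimage, Set.mem_singleton_iff, funext_iff, FO, Set.mem_setOf_eq]
  constructor
  · intro h m hm; rw [extSeq_eq n _ hm]; exact h ⟨m, hm⟩
  · intro h m
    have h2 := h m m.isLt
    rw [extSeq_eq n v m.isLt] at h2
    exact h2

lemma prod_ind_eq_indicator (n : ℕ) (o : ℕ → S_O) (ω : Ω) :
    (∏ m ∈ Finset.range (n + 1), indF (o m) (O m ω)) =
      Set.indicator (FO O n o) (fun _ => (1 : ℝ)) ω := by
  by_cases h : ω ∈ FO O n o
  · rw [Set.indicator_of_mem h]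
    refine Finset.prod_eq_one fun m hm => indF_pos (h m (Finset.mem_range.mp hm))
  · rw [Set.indicator_of_notMem h]
    have : ∃ m < n + 1, ¬ O m ω = o m := by
      by_contra hc
      push_neg at hc
      exact h fun m hm => hc m hm
    obtain ⟨m, hm, hne⟩ := this
    exact Finset.prod_eq_zero (Finset.mem_range.mpr hm) (indF_neg hne)

/-- Star version of condition (A). -/
def StarA (μ : Measure Ω) (H : ℕ → Ω → S_H) (O : ℕ → Ω → S_O) : Prop :=
  ∀ (n : ℕ) (f : S_O → ℝ) (g : S_H → ℝ) (y : ℕ → S_H) (o : ℕ → S_O),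
    μ (FHO H O n y o) ≠ 0 →
    ∫ ω in FHO H O n y o, f (O (n + 1) ω) * g (H (n + 1) ω) ∂μ =
      (μ (FHO H O n y o)).toReal * (qO μ H O n (n + 1) f (y n) * qH μ H n g (y n))

def StarB1 (μ : Measure Ω) (H : ℕ → Ω → S_H) : Prop :=
  ∀ (n : ℕ) (g : S_H → ℝ) (y : ℕ → S_H), μ (FH H n y) ≠ 0 →
    ∫ ω in FH H n y, g (H (n + 1) ω) ∂μ = (μ (FH H n y)).toReal * qH μ H n g (y n)

def StarB2 (μ : Measure Ω) (H : ℕ → Ω → S_H) (O : ℕ → Ω → S_O) : Prop :=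
  ∀ (n : ℕ) (f : ℕ → S_O → ℝ) (y : ℕ → S_H), μ (FH H n y) ≠ 0 →
    ∫ ω in FH H n y, ∏ m ∈ Finset.range (n + 1), f m (O m ω) ∂μ =
      (μ (FH H n y)).toReal *
        ∏ m ∈ Finset.range (n + 1), qO μ H O (m - 1) m (f m) (y (m - 1))

lemma starA_unc (hA : StarA μ H O) (n : ℕ) (f : S_O → ℝ) (g : S_H → ℝ)
    (y : ℕ → S_H) (o : ℕ → S_O) :
    ∫ ω in FHO H O n y o, f (O (n + 1) ω) * g (H (n + 1) ω) ∂μ =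
      (μ (FHO H O n y o)).toReal * (qO μ H O n (n + 1) f (y n) * qH μ H n g (y n)) := by
  by_cases h0 : μ (FHO H O n y o) = 0
  · simp [Measure.restrict_eq_zero.mpr h0, h0]
  · exact hA n f g y o h0

lemma starB1_unc (hB : StarB1 μ H) (n : ℕ) (g : S_H → ℝ) (y : ℕ → S_H) :
    ∫ ω in FH H n y, g (H (n + 1) ω) ∂μ = (μ (FH H n y)).toReal * qH μ H n g (y n) := by
  by_cases h0 : μ (FH H n y) = 0
  · simp [Measure.restrict_eq_zero.mpr h0, h0]
  · exact hB n g y h0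

lemma starB2_unc (hB : StarB2 μ H O) (n : ℕ) (f : ℕ → S_O → ℝ) (y : ℕ → S_H) :
    ∫ ω in FH H n y, ∏ m ∈ Finset.range (n + 1), f m (O m ω) ∂μ =
      (μ (FH H n y)).toReal *
        ∏ m ∈ Finset.range (n + 1), qO μ H O (m - 1) m (f m) (y (m - 1)) := by
  by_cases h0 : μ (FH H n y) = 0
  · simp [Measure.restrict_eq_zero.mpr h0, h0]
  · exact hB n f y h0

lemma starA_to_B1 (hH : ∀ n, @Measurable Ω S_H _ ⊤ (H n))
    (hO : ∀ n, @Measurable Ω S_O _ ⊤ (O n)) (hA : StarA μ H O) : StarB1 μ H := by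
  intro n g y hpos
  have hposHn : μ ((H n) ⁻¹' {y n}) ≠ 0 :=
    fun h => hpos (measure_mono_null (FH_subset_fib (Nat.lt_succ_self n) y) h)
  have uA : ∀ o : ℕ → S_O,
      ∫ ω in FHO H O n y o, g (H (n + 1) ω) ∂μ =
        (μ (FHO H O n y o)).toReal * qH μ H n g (y n) := by
    intro o
    have h1 := starA_unc hA n (fun _ => (1 : ℝ)) g y o
    simp only [one_mul] at h1
    rw [qO_one hposHn, one_mul] at h1
    exact h1
  have hsplit := setIntegral_fiber_sum (μ := μ) (W := fun ω (m : Fin (n + 1)) => O m ω)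
    (fib_ZO_meas hO n) (integrable_comp (fun t => hH (n + 1) trivial) g) (FH H n y)
  have hms := meas_split (μ := μ) (W := fun ω (m : Fin (n + 1)) => O m ω)
    (fib_ZO_meas hO n) (FH H n y)
  calc ∫ ω in FH H n y, g (H (n + 1) ω) ∂μ
      = ∑ v : Fin (n + 1) → S_O,
          ∫ ω in FH H n y ∩ (fun ω (m : Fin (n + 1)) => O m ω) ⁻¹' {v},
            g (H (n + 1) ω) ∂μ := hsplit
    _ = ∑ v : Fin (n + 1) → S_O,
          (μ (FHO H O n y (extSeq n v))).toReal * qH μ H n g (y n) := by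
        refine Finset.sum_congr rfl fun v _ => ?_
        rw [FH_inter_ZO]
        exact uA (extSeq n v)
    _ = (∑ v : Fin (n + 1) → S_O, (μ (FHO H O n y (extSeq n v))).toReal) *
          qH μ H n g (y n) := by rw [Finset.sum_mul]
    _ = (μ (FH H n y)).toReal * qH μ H n g (y n) := by
        congr 1
        rw [hms]
        refine Finset.sum_congr rfl fun v _ => ?_
        rw [FH_inter_ZO]

lemma starA_to_B2 (hH : ∀ n, @Measurable Ω S_H _ ⊤ (H n))
    (hO : ∀ n, @Measurable Ω S_O _ ⊤ (O n)) (hA : StarA μ H O) : StarB2 μ H O := by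
  have hB1 := starA_to_B1 hH hO hA
  intro n
  induction n with
  | zero =>
    intro f y hpos
    have hset : FH H 0 y = (H 0) ⁻¹' {y 0} := FH_zero y
    have hc : (μ (FH H 0 y)).toReal ≠ 0 := toReal_ne_zero' hpos
    simp only [zero_add, Finset.range_one, Finset.prod_singleton]
    rw [qO, avg, ← hset, mul_comm, div_mul_cancel₀ _ hc]
  | succ n ih =>
    intro f y hpos
    have hposn : μ (FH H n y) ≠ 0 :=
      fun h => hpos (measure_mono_null (FH_antitone n y) h)
    have hposHn : μ ((H n) ⁻¹' {y n}) ≠ 0 :=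
      fun h => hposn (measure_mono_null (FH_subset_fib (Nat.lt_succ_self n) y) h)
    set g' : S_H → ℝ := indF (y (n + 1)) with hg'
    -- the integrand is integrable
    have hint : Integrable (fun ω => ∏ m ∈ Finset.range (n + 2), f m (O m ω)) μ := by
      have hXeq : (fun ω => ∏ m ∈ Finset.range (n + 2), f m (O m ω)) =
          fun ω => (fun v : Fin (n + 2) → S_O =>
            ∏ m ∈ Finset.range (n + 2), f m (extSeq (n + 1) v m))
            ((fun ω (m : Fin (n + 2)) => O m ω) ω) := by
        funext ω
        refine Finset.prod_congr rfl fun m hm => ?_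
        rw [extSeq_eq (n + 1) _ (Finset.mem_range.mp hm)]
      rw [hXeq]
      exact integrable_comp (fib_ZO_meas hO (n + 1))
        (fun v : Fin (n + 2) → S_O => ∏ m ∈ Finset.range (n + 2), f m (extSeq (n + 1) v m))
    -- split the integral over observation trajectories up to time n
    have hsplit := setIntegral_fiber_sum (μ := μ) (W := fun ω (m : Fin (n + 1)) => O m ω)
      (fib_ZO_meas hO n) hint (FH H (n + 1) y)
    -- each piece
    have hpiece : ∀ v : Fin (n + 1) → S_O,
        ∫ ω in FH H (n + 1) y ∩ (fun ω (m : Fin (n + 1)) => O m ω) ⁻¹' {v},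
          ∏ m ∈ Finset.range (n + 2), f m (O m ω) ∂μ =
        (∏ m ∈ Finset.range (n + 1), f m (extSeq n v m)) *
          ((μ (FHO H O n y (extSeq n v))).toReal *
            (qO μ H O n (n + 1) (f (n + 1)) (y n) * qH μ H n g' (y n))) := by
      intro v
      have hseteq : FH H (n + 1) y ∩ (fun ω (m : Fin (n + 1)) => O m ω) ⁻¹' {v} =
          FHO H O n y (extSeq n v) ∩ (H (n + 1)) ⁻¹' {y (n + 1)} := by
        rw [FH_succ, Set.inter_comm (FH H n y) _, Set.inter_assoc,
          Set.inter_comm ((H (n+1)) ⁻¹' {y (n+1)}) _, FH_inter_ZO]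
      have hmeas1 : MeasurableSet (FHO H O n y (extSeq n v) ∩ (H (n + 1)) ⁻¹' {y (n + 1)}) :=
        (FHO_meas hH hO n y _).inter (hH (n + 1) trivial)
      rw [hseteq]
      -- on this set the first n+1 factors are constant
      have hcongr : ∫ ω in FHO H O n y (extSeq n v) ∩ (H (n + 1)) ⁻¹' {y (n + 1)},
            ∏ m ∈ Finset.range (n + 2), f m (O m ω) ∂μ =
          ∫ ω in FHO H O n y (extSeq n v) ∩ (H (n + 1)) ⁻¹' {y (n + 1)},
            (∏ m ∈ Finset.range (n + 1), f m (extSeq n v m)) * f (n + 1) (O (n + 1) ω) ∂μ := by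
        refine setIntegral_congr_fun hmeas1 fun ω hω => ?_
        rw [Finset.prod_range_succ]
        congr 1
        refine Finset.prod_congr rfl fun m hm => ?_
        have hm' := Finset.mem_range.mp hm
        rw [hω.1.2 m hm']
      rw [hcongr, integral_const_mul]
      congr 1
      -- now remove the H (n+1) constraint as an indicator
      have hind : ∫ ω in FHO H O n y (extSeq n v) ∩ (H (n + 1)) ⁻¹' {y (n + 1)},
            f (n + 1) (O (n + 1) ω) ∂μ =
          ∫ ω in FHO H O n y (extSeq n v),
            f (n + 1) (O (n + 1) ω) * g' (H (n + 1) ω) ∂μ := by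
        rw [hg', setIntegral_mul_ind (hH (n + 1) trivial)]
      rw [hind]
      exact starA_unc hA n (f (n + 1)) g' y (extSeq n v)
    -- sum of the pieces
    have hsum : ∫ ω in FH H (n + 1) y, ∏ m ∈ Finset.range (n + 2), f m (O m ω) ∂μ =
        (qO μ H O n (n + 1) (f (n + 1)) (y n) * qH μ H n g' (y n)) *
          ∑ v : Fin (n + 1) → S_O,
            (∏ m ∈ Finset.range (n + 1), f m (extSeq n v m)) *
              (μ (FHO H O n y (extSeq n v))).toReal := by
      rw [hsplit]
      rw [Finset.mul_sum]
      refine Finset.sum_congr rfl fun v _ => ?_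
      rw [hpiece v]
      ring
    -- identify the remaining sum with the integral at time n
    have hsum2 : ∑ v : Fin (n + 1) → S_O,
        (∏ m ∈ Finset.range (n + 1), f m (extSeq n v m)) *
          (μ (FHO H O n y (extSeq n v))).toReal =
        ∫ ω in FH H n y, ∏ m ∈ Finset.range (n + 1), f m (O m ω) ∂μ := by
      have hint' : Integrable (fun ω => ∏ m ∈ Finset.range (n + 1), f m (O m ω)) μ := by
        have hXeq : (fun ω => ∏ m ∈ Finset.range (n + 1), f m (O m ω)) =
            fun ω => (fun v : Fin (n + 1) → S_O =>
              ∏ m ∈ Finset.range (n + 1), f m (extSeq n v m))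
              ((fun ω (m : Fin (n + 1)) => O m ω) ω) := by
          funext ω
          refine Finset.prod_congr rfl fun m hm => ?_
          rw [extSeq_eq n _ (Finset.mem_range.mp hm)]
        rw [hXeq]
        exact integrable_comp (fib_ZO_meas hO n)
          (fun v : Fin (n + 1) → S_O => ∏ m ∈ Finset.range (n + 1), f m (extSeq n v m))
      rw [setIntegral_fiber_sum (μ := μ) (W := fun ω (m : Fin (n + 1)) => O m ω)
        (fib_ZO_meas hO n) hint' (FH H n y)]
      refine Finset.sum_congr rfl fun v _ => ?_
      rw [FH_inter_ZO]
      have hmeas2 : MeasurableSet (FHO H O n y (extSeq n v)) := FHO_meas hH hO n y _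
      rw [setIntegral_congr_fun hmeas2
        (g := fun _ => ∏ m ∈ Finset.range (n + 1), f m (extSeq n v m))
        (fun ω hω => Finset.prod_congr rfl fun m hm =>
          by rw [hω.2 m (Finset.mem_range.mp hm)])]
      rw [setIntegral_const, smul_eq_mul, mul_comm]
      rfl
    -- measure recursion
    have hmeasrec : (μ (FH H (n + 1) y)).toReal =
        (μ (FH H n y)).toReal * qH μ H n g' (y n) := by
      have h1 := starB1_unc hB1 n g' y
      rw [hg', setIntegral_ind_one (hH (n + 1) trivial)] at h1
      rw [FH_succ]
      exact h1
    rw [hsum, hsum2, ih f y hposn, hmeasrec,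
      Finset.prod_range_succ (fun m => qO μ H O (m - 1) m (f m) (y (m - 1))) (n + 1)]
    simp only [Nat.add_sub_cancel]
    ring

lemma starB_to_A (hH : ∀ n, @Measurable Ω S_H _ ⊤ (H n))
    (hO : ∀ n, @Measurable Ω S_O _ ⊤ (O n))
    (hB1 : StarB1 μ H) (hB2 : StarB2 μ H O) : StarA μ H O := by
  intro n f g y o hpos
  have hposFH : μ (FH H n y) ≠ 0 :=
    fun h => hpos (measure_mono_null Set.inter_subset_left h)
  have hposHn : μ ((H n) ⁻¹' {y n}) ≠ 0 :=
    fun h => hposFH (measure_mono_null (FH_subset_fib (Nat.lt_succ_self n) y) h)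
  set C : ℝ :=
    ∏ m ∈ Finset.range (n + 1), qO μ H O (m - 1) m (indF (o m)) (y (m - 1)) with hC
  have hFOind : ∀ (S : Set Ω),
      ∫ ω in S, ∏ m ∈ Finset.range (n + 1), indF (o m) (O m ω) ∂μ =
        (μ (S ∩ FO O n o)).toReal := by
    intro S
    rw [integral_congr_ae (ae_of_all _ fun ω => prod_ind_eq_indicator (O := O) n o ω)]
    rw [setIntegral_indicator (FO_meas hO n o), setIntegral_const]
    simp
    rfl
  have hstep5 : (μ (FHO H O n y o)).toReal = (μ (FH H n y)).toReal * C := by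
    have h2 := starB2_unc hB2 n (fun m => indF (o m)) y
    rw [hFOind (FH H n y)] at h2
    exact h2
  have hr : ∀ h' : S_H, (μ (FH H n y ∩ (H (n + 1)) ⁻¹' {h'})).toReal =
      (μ (FH H n y)).toReal * qH μ H n (indF h') (y n) := by
    intro h'
    have h1 := starB1_unc hB1 n (indF h') y
    rw [setIntegral_ind_one (hH (n + 1) trivial)] at h1
    exact h1
  have hpiece : ∀ h' : S_H,
      ∫ ω in FHO H O n y o ∩ (H (n + 1)) ⁻¹' {h'}, f (O (n + 1) ω) ∂μ =
        ((μ (FH H n y)).toReal * qH μ H n (indF h') (y n)) *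
          (C * qO μ H O n (n + 1) f (y n)) := by
    intro h'
    set y' := Function.update y (n + 1) h' with hy'
    set f' : ℕ → S_O → ℝ := fun m => if m = n + 1 then f else indF (o m) with hf'
    have h2 := starB2_unc hB2 (n + 1) f' y'
    have hLHS : ∫ ω in FH H (n + 1) y', ∏ m ∈ Finset.range (n + 2), f' m (O m ω) ∂μ =
        ∫ ω in FHO H O n y o ∩ (H (n + 1)) ⁻¹' {h'}, f (O (n + 1) ω) ∂μ := by
      have hcong : ∀ ω, (∏ m ∈ Finset.range (n + 2), f' m (O m ω)) =
          Set.indicator (FO O n o) (fun ω' => f (O (n + 1) ω')) ω := by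
        intro ω
        rw [Finset.prod_range_succ]
        have e1 : ∀ m ∈ Finset.range (n + 1), f' m (O m ω) = indF (o m) (O m ω) :=
          fun m hm => by
            rw [hf']
            simp only
            rw [if_neg (by have := Finset.mem_range.mp hm; omega)]
        rw [Finset.prod_congr rfl e1]
        have e2 : f' (n + 1) (O (n + 1) ω) = f (O (n + 1) ω) := by
          rw [hf']; simp
        rw [e2, prod_ind_eq_indicator (O := O) n o ω]
        by_cases h : ω ∈ FO O n o
        · rw [Set.indicator_of_mem h, Set.indicator_of_mem h, one_mul]
        · rw [Set.indicator_of_notMem h, Set.indicator_of_notMem h, zero_mul]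
      rw [integral_congr_ae (ae_of_all _ hcong)]
      rw [setIntegral_indicator (FO_meas hO n o)]
      have hset : FH H (n + 1) y' ∩ FO O n o =
          FHO H O n y o ∩ (H (n + 1)) ⁻¹' {h'} := by
        rw [hy', FH_update_succ, FHO, Set.inter_assoc,
          Set.inter_comm ((H (n + 1)) ⁻¹' {h'}) (FO O n o), ← Set.inter_assoc]
      rw [hset]
    have hprod : ∏ m ∈ Finset.range (n + 2), qO μ H O (m - 1) m (f' m) (y' (m - 1)) =
        C * qO μ H O n (n + 1) f (y n) := by
      rw [Finset.prod_range_succ (fun m => qO μ H O (m - 1) m (f' m) (y' (m - 1))) (n + 1)]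
      congr 1
      · rw [hC]
        refine Finset.prod_congr rfl fun m hm => ?_
        have hm' := Finset.mem_range.mp hm
        have e1 : f' m = indF (o m) := by
          rw [hf']; simp only; rw [if_neg (by omega)]
        have e2 : y' (m - 1) = y (m - 1) := by
          rw [hy', Function.update_of_ne (by omega : m - 1 ≠ n + 1)]
        rw [e1, e2]
      · simp only [Nat.add_sub_cancel]
        have e1 : f' (n + 1) = f := by rw [hf']; simp
        have e2 : y' n = y n := by
          rw [hy', Function.update_of_ne (by omega : n ≠ n + 1)]
        rw [e1, e2]
    have hmeq : μ (FH H (n + 1) y') = μ (FH H n y ∩ (H (n + 1)) ⁻¹' {h'}) := by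
      rw [hy', FH_update_succ]
    rw [hLHS, hprod, hmeq, hr h'] at h2
    exact h2
  have hXint : Integrable (fun ω => f (O (n + 1) ω) * g (H (n + 1) ω)) μ :=
    integrable_comp (fib_pair_meas (fun a => hO (n + 1) trivial) (fun b => hH (n + 1) trivial))
      (fun p => f p.1 * g p.2)
  have hsplit := setIntegral_fiber_sum (μ := μ) (W := H (n + 1))
    (fun h' => hH (n + 1) trivial) hXint (FHO H O n y o)
  have hterm : ∀ h' : S_H,
      ∫ ω in FHO H O n y o ∩ (H (n + 1)) ⁻¹' {h'}, f (O (n + 1) ω) * g (H (n + 1) ω) ∂μ =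
        g h' * ∫ ω in FHO H O n y o ∩ (H (n + 1)) ⁻¹' {h'}, f (O (n + 1) ω) ∂μ := by
    intro h'
    have hmeas : MeasurableSet (FHO H O n y o ∩ (H (n + 1)) ⁻¹' {h'}) :=
      (FHO_meas hH hO n y o).inter (hH (n + 1) trivial)
    rw [setIntegral_congr_fun hmeas (g := fun ω => g h' * f (O (n + 1) ω))
      (fun ω hω => by rw [show H (n + 1) ω = h' from hω.2]; ring)]
    rw [integral_const_mul]
  have hdecomp := qH_decomp hH hposHn g
  calc ∫ ω in FHO H O n y o, f (O (n + 1) ω) * g (H (n + 1) ω) ∂μ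
      = ∑ h' : S_H, ∫ ω in FHO H O n y o ∩ (H (n + 1)) ⁻¹' {h'},
          f (O (n + 1) ω) * g (H (n + 1) ω) ∂μ := hsplit
    _ = ∑ h' : S_H, g h' * (((μ (FH H n y)).toReal * qH μ H n (indF h') (y n)) *
          (C * qO μ H O n (n + 1) f (y n))) := by
        refine Finset.sum_congr rfl fun h' _ => ?_
        rw [hterm h', hpiece h']
    _ = ((μ (FH H n y)).toReal * C * qO μ H O n (n + 1) f (y n)) *
          ∑ h' : S_H, g h' * qH μ H n (indF h') (y n) := by
        rw [Finset.mul_sum]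
        refine Finset.sum_congr rfl fun h' _ => ?_
        ring
    _ = (μ (FHO H O n y o)).toReal *
          (qO μ H O n (n + 1) f (y n) * qH μ H n g (y n)) := by
        rw [← hdecomp, hstep5]
        ring

end Main

/-- Equivalence between the backward hidden Markov condition (A) and the
conjunction (B) of Markovianity of the hidden process together with the time-consecutive
conditional independence condition (with the convention `σ(H_{−1}) := σ(H₀)`, implemented by
truncated subtraction `m - 1`). -/
theorem stmt18 {S_H S_O : Type*} [Fintype S_H] [Fintype S_O]
    [Nonempty S_H] [Nonempty S_O]
    {Ω : Type*} [MeasurableSpace Ω] (μ : Measure Ω) [IsProbabilityMeasure μ]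
    (H : ℕ → Ω → S_H) (O : ℕ → Ω → S_O)
    (hH : ∀ n, @Measurable Ω S_H _ ⊤ (H n))
    (hO : ∀ n, @Measurable Ω S_O _ ⊤ (O n)) :
    (∀ n : ℕ, ∀ f : S_O → ℝ, ∀ g : S_H → ℝ,
        μ[(fun ω => f (O (n + 1) ω) * g (H (n + 1) ω)) | sigHO H O n] =ᵐ[μ]
          fun ω =>
            (μ[(fun ω' => f (O (n + 1) ω')) | sigH H n]) ω *
              (μ[(fun ω' => g (H (n + 1) ω')) | sigH H n]) ω) ↔
      ((∀ n : ℕ, ∀ g : S_H → ℝ,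
          μ[(fun ω => g (H (n + 1) ω)) | sigHs H n] =ᵐ[μ]
            μ[(fun ω => g (H (n + 1) ω)) | sigH H n]) ∧
        (∀ n : ℕ, ∀ f : ℕ → S_O → ℝ,
          μ[(fun ω => ∏ m ∈ Finset.range (n + 1), f m (O m ω)) | sigHs H n] =ᵐ[μ]
            fun ω => ∏ m ∈ Finset.range (n + 1),
              (μ[(fun ω' => f m (O m ω')) | sigH H (m - 1)]) ω)) := by
  constructor
  · intro hA
    have hA' : StarA μ H O := fun n f g y o h => (transA hH hO n f g).mp (hA n f g) y o h
    exact ⟨fun n g => (transB1 hH n g).mpr fun y h => starA_to_B1 hH hO hA' n g y h,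
      fun n f => (transB2 hH hO n f).mpr fun y h => starA_to_B2 hH hO hA' n f y h⟩
  · rintro ⟨hb1, hb2⟩ n f g
    have hB1' : StarB1 μ H := fun k g' y h => (transB1 hH k g').mp (hb1 k g') y h
    have hB2' : StarB2 μ H O := fun k f' y h => (transB2 hH hO k f').mp (hb2 k f') y h
    exact (transA hH hO n f g).mpr fun y o h => starB_to_A hH hO hB1' hB2' n f g y o h
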